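/- Let X be a metric space, let I ⊔ J be a partition of {1,…,n}, let w_1,…,w_n be positive weights summing to 1 with W_I = ∑_{i∈I} w_i < 1/2, let K be a nonempty bounded subset of X containing z_j for all j ∈ J, and let z'_i ∈ X for i ∈ I be arbitrary. Define F'(z) = ∑_{j∈J} w_j d(z, z_j) + ∑_{i∈I} w_i d(z, z'_i). Then every minimizer z̄ of F' (i.e., F'(z̄) ≤ F'(z) for all z ∈ X) satisfies d(z̄, K) ≤ diam(K) / (1 − 2 W_I). -/

import Mathlib

open scoped BigOperators

/-- Breakdown, case `W_I < 1/2`. If the contaminated weight is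
less than `1/2` and `K` is a nonempty bounded set containing the clean points,
then every minimizer `z̄` of the contaminated objective satisfies
`d(z̄, K) ≤ diam(K) / (1 − 2 W_I)`. -/
theorem median_bounded_of_contamination_lt_half
    {X : Type*} [MetricSpace X]
    {n : ℕ} (I J : Finset (Fin n))
    (hdisj : Disjoint I J) (hcover : I ∪ J = Finset.univ)
    (w : Fin n → ℝ) (hw : ∀ i, 0 < w i) (hsum : ∑ i, w i = 1)
    (hWI : ∑ i ∈ I, w i < 1 / 2)
    (K : Set X) (hK : K.Nonempty) (hKb : Bornology.IsBounded K)
    (z : Fin n → X) (hz : ∀ j ∈ J, z j ∈ K)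
    (z' : Fin n → X)
    (zbar : X)
    (hmin : ∀ p : X,
      (∑ j ∈ J, w j * dist zbar (z j)) + ∑ i ∈ I, w i * dist zbar (z' i) ≤
        (∑ j ∈ J, w j * dist p (z j)) + ∑ i ∈ I, w i * dist p (z' i)) :
    Metric.infDist zbar K ≤ Metric.diam K / (1 - 2 * ∑ i ∈ I, w i) := by
  set WI := ∑ i ∈ I, w i with hWIdef
  have hWJ : ∑ j ∈ J, w j = 1 - WI := by
    have h : WI + ∑ j ∈ J, w j = 1 := by
      rw [hWIdef, ← Finset.sum_union hdisj, hcover, hsum]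
    linarith
  have hWIpos : 0 ≤ WI :=
    Finset.sum_nonneg fun i _ => (hw i).le
  have hc : 0 < 1 - 2 * WI := by linarith
  rw [le_div_iff₀ hc]
  apply le_of_forall_pos_le_add
  intro ε hε
  obtain ⟨y, hyK, hy⟩ := (Metric.infDist_lt_iff hK).mp
    (lt_add_of_pos_right (Metric.infDist zbar K) hε)
  set dI := Metric.infDist zbar K with hdI
  have hdInn : 0 ≤ dI := Metric.infDist_nonneg
  -- lower bound for clean terms at zbar
  have h1 : ∑ j ∈ J, w j * dI ≤ ∑ j ∈ J, w j * dist zbar (z j) :=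
    Finset.sum_le_sum fun j hj =>
      mul_le_mul_of_nonneg_left (Metric.infDist_le_dist_of_mem (hz j hj)) (hw j).le
  -- lower bound for contaminated terms at zbar
  have h2 : ∑ i ∈ I, w i * (dist y (z' i) - dist zbar y)
      ≤ ∑ i ∈ I, w i * dist zbar (z' i) := by
    refine Finset.sum_le_sum fun i _ => mul_le_mul_of_nonneg_left ?_ (hw i).le
    have := dist_triangle y zbar (z' i)
    have h' : dist y zbar = dist zbar y := dist_comm y zbar
    linarith
  -- upper bound for clean terms at y
  have h3 : ∑ j ∈ J, w j * dist y (z j) ≤ ∑ j ∈ J, w j * Metric.diam K :=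
    Finset.sum_le_sum fun j hj =>
      mul_le_mul_of_nonneg_left (Metric.dist_le_diam_of_mem hKb hyK (hz j hj)) (hw j).le
  have hsum1 : ∑ j ∈ J, w j * dI = (1 - WI) * dI := by
    rw [← Finset.sum_mul, hWJ]
  have hsum3 : ∑ j ∈ J, w j * Metric.diam K = (1 - WI) * Metric.diam K := by
    rw [← Finset.sum_mul, hWJ]
  have hsum2 : ∑ i ∈ I, w i * (dist y (z' i) - dist zbar y)
      = (∑ i ∈ I, w i * dist y (z' i)) - WI * dist zbar y := by
    simp only [mul_sub, Finset.sum_sub_distrib, ← Finset.sum_mul]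
    rfl
  have hmy := hmin y
  have hdiam : 0 ≤ Metric.diam K := Metric.diam_nonneg
  have hdy : dist zbar y ≤ dI + ε := hy.le
  nlinarith [hWIpos, hε.le]
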